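/- The polynomial G = X₀²X₁²X₂X₃ + X₀X₁²X₂²X₃ + X₀X₁X₂²X₃² + X₀²X₁X₂ + X₁X₂X₃² + X₀X₁X₂ + X₀X₁X₃ + X₀X₂X₃ + X₁X₂X₃ + X₀ + X₃ + 1, with coefficients in 𝔽₂ and variables X₀, X₁, X₂, X₃, is absolutely irreducible: viewed as an element of K[X₀,X₁,X₂,X₃] where K is an algebraic closure of 𝔽₂, G is irreducible. -/

import Mathlib

noncomputable section
namespace S17
open MvPolynomial

abbrev K : Type := AlgebraicClosure (ZMod 2)
abbrev R2 : Type := MvPolynomial (Fin 2) K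
abbrev R3 : Type := MvPolynomial (Fin 3) K

lemma h2K : (2 : K) = 0 := by exact_mod_cast CharP.cast_eq_zero K 2
lemma h2R2 : (2 : R2) = 0 := by rw [← map_ofNat (C : K →+* R2) 2, h2K]; simp
lemma h2R3 : (2 : R3) = 0 := by rw [← map_ofNat (C : K →+* R3) 2, h2K]; simp
lemma h2P2 : (2 : Polynomial R2) = 0 := by
  rw [← map_ofNat (Polynomial.C : R2 →+* Polynomial R2) 2, h2R2]; simp

lemma exists_omega : ∃ ω : K, ω ^ 2 + ω + 1 = 0 ∧ ω ≠ 1 := by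
  have hdeg : (Polynomial.X ^ 2 + Polynomial.X + 1 : Polynomial K).degree = 2 := by
    compute_degree!
  obtain ⟨ω, hω⟩ := IsAlgClosed.exists_root
    (p := (Polynomial.X ^ 2 + Polynomial.X + 1 : Polynomial K)) (by rw [hdeg]; decide)
  have hω' : ω ^ 2 + ω + 1 = 0 := by simpa [Polynomial.IsRoot] using hω
  exact ⟨ω, hω', by rintro rfl; exact one_ne_zero (by linear_combination hω' - h2K)⟩

lemma prime_X0_R2 : Prime (X 0 : R2) := by
  have h := (MulEquiv.prime_iff (finSuccEquiv K 1).toMulEquiv (p := (X 0 : R2)))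
  rw [← h]
  show Prime ((finSuccEquiv K 1) (X 0))
  rw [finSuccEquiv_X_zero]
  exact Polynomial.prime_X

lemma prime_X0_R3 : Prime (X 0 : R3) := by
  have h := (MulEquiv.prime_iff (finSuccEquiv K 2).toMulEquiv (p := (X 0 : R3)))
  rw [← h]
  show Prime ((finSuccEquiv K 2) (X 0))
  rw [finSuccEquiv_X_zero]
  exact Polynomial.prime_X

lemma prime_X1_R3 : Prime (X 1 : R3) := by
  have h := (MulEquiv.prime_iff (finSuccEquiv K 2).toMulEquiv (p := (X 1 : R3)))
  rw [← h]
  show Prime ((finSuccEquiv K 2) (X 1))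
  rw [show (1 : Fin 3) = Fin.succ 0 from rfl, finSuccEquiv_X_succ]
  rw [Polynomial.prime_C_iff]
  exact prime_X0_R2

def A3 : R3 := X 0 ^ 2 * X 1 * X 2 + X 0 * X 1
def B3 : R3 := X 0 ^ 2 * X 1 ^ 2 * X 2 + X 0 * X 1 ^ 2 * X 2 ^ 2 + X 0 * X 1 + X 0 * X 2
  + X 1 * X 2 + 1
def c3 : R3 := X 0 * X 1 * X 2 ^ 2 + X 0 * X 1 * X 2 + X 2 + 1

def Bp : Polynomial R2 :=
  Polynomial.C (X 0 ^ 2 * X 1) * Polynomial.X ^ 2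
    + Polynomial.C (X 0 ^ 2 * X 1 ^ 2 + X 0 + X 1) * Polynomial.X
    + Polynomial.C (X 0 * X 1 + 1)
def Ep : Polynomial R2 :=
  Polynomial.C (X 0 ^ 2 * X 1 ^ 3 + X 0 ^ 2 * X 1 ^ 2) * Polynomial.X ^ 3
    + Polynomial.C (X 0 ^ 2 * X 1 ^ 2 + X 0 ^ 2 * X 1 + X 0 * X 1 ^ 2 + X 0 * X 1) * Polynomial.X ^ 2
    + Polynomial.C (X 0 * X 1 + X 0) * Polynomial.X

lemma psi_B3 : finSuccEquiv K 2 B3 = Bp := by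
  rw [B3, Bp]
  simp only [show (1 : Fin 3) = Fin.succ 0 from rfl, show (2 : Fin 3) = Fin.succ 1 from rfl,
    map_add, map_mul, map_pow, map_one, finSuccEquiv_X_zero, finSuccEquiv_X_succ]
  ring

lemma psi_A3_c3 : finSuccEquiv K 2 A3 * finSuccEquiv K 2 c3 = Ep := by
  rw [A3, c3, Ep]
  simp only [show (1 : Fin 3) = Fin.succ 0 from rfl, show (2 : Fin 3) = Fin.succ 1 from rfl,
    map_add, map_mul, map_pow, map_one, finSuccEquiv_X_zero, finSuccEquiv_X_succ]
  ring

lemma key (a b : R2)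
    (h : (Polynomial.C a * Polynomial.X + Polynomial.C b) ^ 2
      + Bp * (Polynomial.C a * Polynomial.X + Polynomial.C b) + Ep = 0) : False := by
  have hcan : (Polynomial.C a * Polynomial.X + Polynomial.C b) ^ 2
      + Bp * (Polynomial.C a * Polynomial.X + Polynomial.C b) + Ep
      = Polynomial.C (X 0 ^ 2 * X 1 * a + (X 0 ^ 2 * X 1 ^ 3 + X 0 ^ 2 * X 1 ^ 2)) * Polynomial.X ^ 3
      + Polynomial.C (a ^ 2 + (X 0 ^ 2 * X 1 ^ 2 + X 0 + X 1) * a + X 0 ^ 2 * X 1 * b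
          + (X 0 ^ 2 * X 1 ^ 2 + X 0 ^ 2 * X 1 + X 0 * X 1 ^ 2 + X 0 * X 1)) * Polynomial.X ^ 2
      + Polynomial.C (2 * a * b + (X 0 ^ 2 * X 1 ^ 2 + X 0 + X 1) * b + (X 0 * X 1 + 1) * a
          + (X 0 * X 1 + X 0)) * Polynomial.X
      + Polynomial.C (b ^ 2 + (X 0 * X 1 + 1) * b) := by
    rw [Bp, Ep]
    simp only [map_add, map_mul, map_pow, map_one, map_ofNat]
    ring
  rw [hcan] at h
  have h3 := congrArg (fun p => Polynomial.coeff p 3) h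
  have h2c := congrArg (fun p => Polynomial.coeff p 2) h
  simp only [Polynomial.coeff_add, Polynomial.coeff_C_mul, Polynomial.coeff_X_pow,
    Polynomial.coeff_C, Polynomial.coeff_zero, Polynomial.coeff_X] at h3 h2c
  norm_num at h3 h2c
  have hne : (X 0 : R2) ^ 2 * X 1 ≠ 0 :=
    mul_ne_zero (pow_ne_zero _ (MvPolynomial.X_ne_zero _)) (MvPolynomial.X_ne_zero _)
  have hprod : (X 0 : R2) ^ 2 * X 1 * (a + (X 1 ^ 2 + X 1)) = 0 := by linear_combination h3
  have ha : a + ((X 1 : R2) ^ 2 + X 1) = 0 := by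
    rcases mul_eq_zero.mp hprod with h' | h'
    · exact absurd h' hne
    · exact h'
  obtain ⟨ω, hω, hω1⟩ := exists_omega
  have e1 := congrArg (MvPolynomial.eval (![0, ω] : Fin 2 → K)) ha
  have e2 := congrArg (MvPolynomial.eval (![0, ω] : Fin 2 → K)) h2c
  simp only [map_add, map_mul, map_pow, map_zero, map_one, eval_X, Matrix.cons_val_zero,
    Matrix.cons_val_one, Matrix.head_cons, zero_pow, ne_eq, OfNat.ofNat_ne_zero,
    not_false_eq_true, zero_mul, mul_zero, add_zero, zero_add, reduceIte, if_false,
    one_mul] at e1 e2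
  set s := MvPolynomial.eval (![0, ω] : Fin 2 → K) a with hs
  have hfinal : (1 : K) = 0 := by
    linear_combination (1 + ω ^ 3 - ω) * hω - ω * e2 + (ω * s - ω ^ 3) * e1
  exact one_ne_zero hfinal


lemma L2 (W : Polynomial R2) (h : W ^ 2 + Bp * W + Ep = 0) : False := by
  have hEpne : Ep ≠ 0 := by
    intro hE
    have h1 := congrArg (fun p => Polynomial.coeff p 1) hE
    simp only [Ep, Polynomial.coeff_add, Polynomial.coeff_C_mul, Polynomial.coeff_X_pow,
      Polynomial.coeff_X, Polynomial.coeff_zero] at h1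
    norm_num at h1
    have := congrArg (MvPolynomial.eval (![1, 0] : Fin 2 → K)) h1
    simp at this
  have hW0 : W ≠ 0 := by rintro rfl; simp at h; exact hEpne h
  have hBple : Bp.natDegree ≤ 2 := by rw [Bp]; compute_degree
  have hEple : Ep.natDegree ≤ 3 := by rw [Ep]; compute_degree
  have hsq : W ^ 2 = Bp * W + Ep := by linear_combination h - (Bp * W + Ep) * h2P2
  have hdle : W.natDegree ≤ 2 := by
    by_contra hgt
    push_neg at hgt
    have hl : (W ^ 2).natDegree = W.natDegree + W.natDegree := by
      rw [pow_two, Polynomial.natDegree_mul hW0 hW0]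
    have hr : (Bp * W + Ep).natDegree ≤ max (2 + W.natDegree) 3 :=
      le_trans (Polynomial.natDegree_add_le _ _)
        (max_le_max (le_trans Polynomial.natDegree_mul_le (by omega)) hEple)
    rw [hsq] at hl
    rw [hl] at hr
    omega
  rcases Nat.lt_or_ge W.natDegree 2 with hd1 | hd2
  · obtain ⟨a, b, hab⟩ := Polynomial.exists_eq_X_add_C_of_natDegree_le_one (p := W) (by omega)
    rw [hab] at h
    exact key a b h
  · have hd2' : W.natDegree = 2 := le_antisymm hdle hd2
    -- leading coefficient analysis
    have hlcW : W.coeff 2 ≠ 0 := by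
      have := Polynomial.leadingCoeff_ne_zero.mpr hW0
      rwa [Polynomial.leadingCoeff, hd2'] at this
    have hc4 := congrArg (fun p => Polynomial.coeff p 4) h
    have hWW : (W ^ 2).coeff 4 = W.coeff 2 * W.coeff 2 := by
      rw [pow_two]
      have := Polynomial.coeff_mul_degree_add_degree W W
      rw [hd2'] at this
      simpa [Polynomial.leadingCoeff, hd2'] using this
    have hBpdeg : Bp.natDegree = 2 := by
      rw [Bp]
      compute_degree!
    have hBpc2 : Bp.coeff 2 = X 0 ^ 2 * X 1 := by
      simp only [Bp, Polynomial.coeff_add, Polynomial.coeff_C_mul, Polynomial.coeff_X_pow,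
        Polynomial.coeff_X, Polynomial.coeff_C]
      norm_num
    have hBW : (Bp * W).coeff 4 = X 0 ^ 2 * X 1 * W.coeff 2 := by
      have := Polynomial.coeff_mul_degree_add_degree Bp W
      rw [hd2', hBpdeg] at this
      simpa [Polynomial.leadingCoeff, hd2', hBpdeg, hBpc2] using this
    have hEc4 : Ep.coeff 4 = 0 :=
      Polynomial.coeff_eq_zero_of_natDegree_lt (by omega)
    simp only [Polynomial.coeff_add, hWW, hBW, hEc4, Polynomial.coeff_zero] at hc4
    -- hc4 : W.coeff 2 * W.coeff 2 + X 0 ^ 2 * X 1 * W.coeff 2 + 0 = 0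
    have hfact : W.coeff 2 * (W.coeff 2 + X 0 ^ 2 * X 1) = 0 := by linear_combination hc4
    have hlc : W.coeff 2 + X 0 ^ 2 * X 1 = 0 := by
      rcases mul_eq_zero.mp hfact with h' | h'
      · exact absurd h' hlcW
      · exact h'
    -- W' := W + Bp
    have hdeg' : (W + Bp).natDegree ≤ 1 := by
      rw [Polynomial.natDegree_le_iff_coeff_eq_zero]
      intro N hN
      rcases Nat.lt_or_ge N 3 with hN3 | hN3
      · have hN2 : N = 2 := by omega
        subst hN2
        rw [Polynomial.coeff_add, hBpc2]
        linear_combination hlc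
      · rw [Polynomial.coeff_add,
          Polynomial.coeff_eq_zero_of_natDegree_lt (by omega),
          Polynomial.coeff_eq_zero_of_natDegree_lt (by omega), add_zero]
    have hEq' : (W + Bp) ^ 2 + Bp * (W + Bp) + Ep = 0 := by
      linear_combination h + (W * Bp + Bp ^ 2) * h2P2
    obtain ⟨a, b, hab⟩ := Polynomial.exists_eq_X_add_C_of_natDegree_le_one hdeg'
    rw [hab] at hEq'
    exact key a b hEq'



lemma L3 (w : R3) (h : w ^ 2 + B3 * w + A3 * c3 = 0) : False := by
  have hm := congrArg (finSuccEquiv K 2) h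
  simp only [map_add, map_mul, map_pow, map_zero] at hm
  rw [psi_B3, psi_A3_c3] at hm
  exact L2 _ hm

lemma irr_lin : Irreducible (Polynomial.C (X 1 : R2) * Polynomial.X + 1) := by
  have hdeg : (Polynomial.C (X 1 : R2) * Polynomial.X + 1).natDegree = 1 := by
    compute_degree!
  constructor
  · intro hu
    have h0 := Polynomial.natDegree_eq_zero_of_isUnit hu
    omega
  · intro f g hfg
    have hne : (Polynomial.C (X 1 : R2) * Polynomial.X + 1) ≠ 0 := by
      intro h0
      rw [h0] at hdeg
      simp at hdeg
    have hf0 : f ≠ 0 := by rintro rfl; rw [zero_mul] at hfg; exact hne hfg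
    have hg0 : g ≠ 0 := by rintro rfl; rw [mul_zero] at hfg; exact hne hfg
    have hcoe : f.coeff 0 * g.coeff 0 = 1 := by
      have := congrArg (fun p => Polynomial.coeff p 0) hfg
      simp only [Polynomial.coeff_add, Polynomial.coeff_one, Polynomial.mul_coeff_zero] at this
      simp only [Polynomial.coeff_C_mul, Polynomial.coeff_X_zero, mul_zero, zero_add] at this
      exact this.symm
    have hds : f.natDegree + g.natDegree = 1 := by
      rw [← Polynomial.natDegree_mul hf0 hg0, ← hfg, hdeg]
    rcases Nat.eq_zero_or_pos f.natDegree with hf | hf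
    · left
      rw [Polynomial.eq_C_of_natDegree_eq_zero hf]
      exact Polynomial.isUnit_C.mpr (IsUnit.of_mul_eq_one _ hcoe)
    · right
      have hg : g.natDegree = 0 := by omega
      rw [Polynomial.eq_C_of_natDegree_eq_zero hg]
      exact Polynomial.isUnit_C.mpr (IsUnit.of_mul_eq_one _ (by rw [mul_comm]; exact hcoe))

lemma prime_t3 : Prime (X 0 * X 2 + 1 : R3) := by
  have h := (MulEquiv.prime_iff (finSuccEquiv K 2).toMulEquiv (p := (X 0 * X 2 + 1 : R3)))
  rw [← h]
  show Prime ((finSuccEquiv K 2) (X 0 * X 2 + 1))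
  rw [show ((finSuccEquiv K 2) (X 0 * X 2 + 1) : Polynomial R2)
      = Polynomial.C (X 1) * Polynomial.X + 1 by
    simp only [show (2 : Fin 3) = Fin.succ 1 from rfl, map_add, map_mul, map_one,
      finSuccEquiv_X_zero, finSuccEquiv_X_succ]
    ring]
  exact UniqueFactorizationMonoid.irreducible_iff_prime.mp irr_lin

lemma const_case (r : R3) (hrU : ¬IsUnit r) (hrne : r ≠ 0)
    (hA : r ∣ A3) (hB : r ∣ B3) : False := by
  obtain ⟨p, hpirr, hpr⟩ := WfDvdMonoid.exists_irreducible_factor hrU hrne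
  have hp : Prime p := UniqueFactorizationMonoid.irreducible_iff_prime.mp hpirr
  have hpA : p ∣ X 0 * (X 1 * (X 0 * X 2 + 1)) := by
    refine dvd_trans (dvd_trans hpr hA) (dvd_of_eq ?_)
    rw [A3]; ring
  have hpB : p ∣ B3 := dvd_trans hpr hB
  rcases hp.2.2 _ _ hpA with h0 | h12
  · have hX : (X 0 : R3) ∣ B3 := ((hp.associated_of_dvd prime_X0_R3 h0).symm.dvd).trans hpB
    obtain ⟨c, hc⟩ := hX
    have := congrArg (eval (![0, 0, 0] : Fin 3 → K)) hc
    simp [B3] at this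
  · rcases hp.2.2 _ _ h12 with h1 | h2
    · have hX : (X 1 : R3) ∣ B3 := ((hp.associated_of_dvd prime_X1_R3 h1).symm.dvd).trans hpB
      obtain ⟨c, hc⟩ := hX
      have := congrArg (eval (![0, 0, 0] : Fin 3 → K)) hc
      simp [B3] at this
    · have hX : (X 0 * X 2 + 1 : R3) ∣ B3 := ((hp.associated_of_dvd prime_t3 h2).symm.dvd).trans hpB
      obtain ⟨c, hc⟩ := hX
      obtain ⟨ω, hω, hω1⟩ := exists_omega
      have hω3 : ω ^ 3 = 1 := by linear_combination (ω - 1) * hω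
      have hev := congrArg (eval (![ω, ω, ω ^ 2] : Fin 3 → K)) hc
      simp only [B3, map_add, map_mul, map_pow, map_one, eval_X, Matrix.cons_val_zero,
        Matrix.cons_val_one, Matrix.head_cons, Matrix.cons_val_two, Matrix.tail_cons] at hev
      set c' := eval (![ω, ω, ω ^ 2] : Fin 3 → K) c with hc'
      have : (1 : K) = 0 := by
        linear_combination hev - hω - ((ω ^ 3 + 1) * (1 + ω) - c') * hω3 - (ω ^ 3 - c') * h2K
      exact one_ne_zero this

def qp : Polynomial R3 :=
  Polynomial.C A3 * Polynomial.X ^ 2 + Polynomial.C B3 * Polynomial.X + Polynomial.C c3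

lemma hA3ne : A3 ≠ 0 := by
  intro h0
  have := congrArg (eval (![1, 1, 0] : Fin 3 → K)) h0
  simp [A3] at this

lemma hqpdeg : qp.natDegree = 2 := by
  rw [qp]
  compute_degree!
  exact hA3ne

lemma hqpne : qp ≠ 0 := by
  intro h0
  have := hqpdeg
  rw [h0] at this
  simp at this

lemma qp_coeff2 : qp.coeff 2 = A3 := by
  simp only [qp, Polynomial.coeff_add, Polynomial.coeff_C_mul, Polynomial.coeff_X_pow,
    Polynomial.coeff_X, Polynomial.coeff_C]
  norm_num

lemma qp_coeff1 : qp.coeff 1 = B3 := by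
  simp only [qp, Polynomial.coeff_add, Polynomial.coeff_C_mul, Polynomial.coeff_X_pow,
    Polynomial.coeff_X, Polynomial.coeff_C]
  norm_num

lemma qp_coeff0 : qp.coeff 0 = c3 := by
  simp only [qp, Polynomial.coeff_add, Polynomial.coeff_C_mul, Polynomial.coeff_X_pow,
    Polynomial.coeff_X, Polynomial.coeff_C]
  norm_num

lemma deg0_case (f g : Polynomial R3) (hfg : qp = f * g) (h0 : f.natDegree = 0)
    (hfU : ¬IsUnit f) (hf0 : f ≠ 0) : False := by
  set r := f.coeff 0 with hr
  have hfc : f = Polynomial.C r := Polynomial.eq_C_of_natDegree_eq_zero h0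
  have hrU : ¬IsUnit r := fun h => hfU (hfc ▸ Polynomial.isUnit_C.mpr h)
  have hrne : r ≠ 0 := fun h => hf0 (by rw [hfc, h, map_zero])
  rw [hfc] at hfg
  have hA : r ∣ A3 := by
    refine ⟨g.coeff 2, ?_⟩
    have := congrArg (fun p => Polynomial.coeff p 2) hfg
    simpa [qp_coeff2, Polynomial.coeff_C_mul] using this
  have hB : r ∣ B3 := by
    refine ⟨g.coeff 1, ?_⟩
    have := congrArg (fun p => Polynomial.coeff p 1) hfg
    simpa [qp_coeff1, Polynomial.coeff_C_mul] using this
  exact const_case r hrU hrne hA hB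

lemma irr_qp : Irreducible qp := by
  constructor
  · intro hu
    have := Polynomial.natDegree_eq_zero_of_isUnit hu
    rw [hqpdeg] at this
    simp at this
  · intro f g hfg
    by_contra hcon
    push_neg at hcon
    obtain ⟨hfU, hgU⟩ := hcon
    have hf0 : f ≠ 0 := by rintro rfl; rw [zero_mul] at hfg; exact hqpne hfg
    have hg0 : g ≠ 0 := by rintro rfl; rw [mul_zero] at hfg; exact hqpne hfg
    have hsum : f.natDegree + g.natDegree = 2 := by
      rw [← Polynomial.natDegree_mul hf0 hg0, ← hfg, hqpdeg]
    rcases Nat.eq_zero_or_pos f.natDegree with hfd | hfd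
    · exact deg0_case f g hfg hfd hfU hf0
    rcases Nat.eq_zero_or_pos g.natDegree with hgd | hgd
    · exact deg0_case g f (by rw [hfg, mul_comm]) hgd hgU hg0
    have hfd1 : f.natDegree = 1 := by omega
    have hgd1 : g.natDegree = 1 := by omega
    obtain ⟨a, b, hab⟩ := Polynomial.exists_eq_X_add_C_of_natDegree_le_one (p := f) (by omega)
    obtain ⟨c, d, hcd⟩ := Polynomial.exists_eq_X_add_C_of_natDegree_le_one (p := g) (by omega)
    rw [hab, hcd] at hfg
    have hexp : (Polynomial.C a * Polynomial.X + Polynomial.C b)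
        * (Polynomial.C c * Polynomial.X + Polynomial.C d)
        = Polynomial.C (a * c) * Polynomial.X ^ 2
          + Polynomial.C (a * d + b * c) * Polynomial.X + Polynomial.C (b * d) := by
      simp only [map_add, map_mul]
      ring
    rw [hexp] at hfg
    have h2 : A3 = a * c := by
      have := congrArg (fun p => Polynomial.coeff p 2) hfg
      simp only [Polynomial.coeff_add, Polynomial.coeff_C_mul, Polynomial.coeff_X_pow,
        Polynomial.coeff_X, Polynomial.coeff_C, qp_coeff2] at this
      norm_num at this
      simpa [qp_coeff2] using this
    have h1 : B3 = a * d + b * c := by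
      have := congrArg (fun p => Polynomial.coeff p 1) hfg
      simp only [Polynomial.coeff_add, Polynomial.coeff_C_mul, Polynomial.coeff_X_pow,
        Polynomial.coeff_X, Polynomial.coeff_C, qp_coeff1] at this
      norm_num at this
      simpa [qp_coeff1] using this
    have h0 : c3 = b * d := by
      have := congrArg (fun p => Polynomial.coeff p 0) hfg
      simp only [Polynomial.coeff_add, Polynomial.coeff_C_mul, Polynomial.coeff_X_pow,
        Polynomial.coeff_X, Polynomial.coeff_C, qp_coeff0] at this
      norm_num at this
      simpa [qp_coeff0] using this
    refine L3 (b * c) ?_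
    linear_combination (b * c) * h1 + (b * d) * h2 + A3 * h0
      + (b ^ 2 * c ^ 2 + a * b * c * d) * h2R3

end S17

noncomputable section

open MvPolynomial in
theorem statement17 :
    Irreducible
      ((X 0) ^ 2 * (X 1) ^ 2 * (X 2) * (X 3) + (X 0) * (X 1) ^ 2 * (X 2) ^ 2 * (X 3)
        + (X 0) * (X 1) * (X 2) ^ 2 * (X 3) ^ 2 + (X 0) ^ 2 * (X 1) * (X 2)
        + (X 1) * (X 2) * (X 3) ^ 2 + (X 0) * (X 1) * (X 2) + (X 0) * (X 1) * (X 3)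
        + (X 0) * (X 2) * (X 3) + (X 1) * (X 2) * (X 3) + X 0 + X 3 + 1 :
        MvPolynomial (Fin 4) (AlgebraicClosure (ZMod 2))) := by
  have hmap : finSuccEquiv S17.K 3
      ((X 0) ^ 2 * (X 1) ^ 2 * (X 2) * (X 3) + (X 0) * (X 1) ^ 2 * (X 2) ^ 2 * (X 3)
        + (X 0) * (X 1) * (X 2) ^ 2 * (X 3) ^ 2 + (X 0) ^ 2 * (X 1) * (X 2)
        + (X 1) * (X 2) * (X 3) ^ 2 + (X 0) * (X 1) * (X 2) + (X 0) * (X 1) * (X 3)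
        + (X 0) * (X 2) * (X 3) + (X 1) * (X 2) * (X 3) + X 0 + X 3 + 1 :
        MvPolynomial (Fin 4) S17.K) = S17.qp := by
    rw [S17.qp, S17.A3, S17.B3, S17.c3]
    simp only [show (1 : Fin 4) = Fin.succ 0 from rfl, show (2 : Fin 4) = Fin.succ 1 from rfl,
      show (3 : Fin 4) = Fin.succ 2 from rfl,
      map_add, map_mul, map_pow, map_one, finSuccEquiv_X_zero, finSuccEquiv_X_succ]
    ring
  have hirr : Irreducible ((finSuccEquiv S17.K 3)
      ((X 0) ^ 2 * (X 1) ^ 2 * (X 2) * (X 3) + (X 0) * (X 1) ^ 2 * (X 2) ^ 2 * (X 3)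
        + (X 0) * (X 1) * (X 2) ^ 2 * (X 3) ^ 2 + (X 0) ^ 2 * (X 1) * (X 2)
        + (X 1) * (X 2) * (X 3) ^ 2 + (X 0) * (X 1) * (X 2) + (X 0) * (X 1) * (X 3)
        + (X 0) * (X 2) * (X 3) + (X 1) * (X 2) * (X 3) + X 0 + X 3 + 1 :
        MvPolynomial (Fin 4) S17.K)) := by
    rw [hmap]; exact S17.irr_qp
  exact (MulEquiv.irreducible_iff (finSuccEquiv S17.K 3).toMulEquiv).mp hirr
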